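/- Let G and H be finite groups of the same order, and let α : G →* MulAut H be an action of G on H by automorphisms. Suppose the action has exactly one non-trivial orbit L (i.e. exactly one orbit with more than one element). Then the fixed-point subgroup H^G has index 2 in H, and |L| = |H|/2; in particular L = H \ H^G. -/
import Mathlib

/-- The orbit of `a : H` under the action of `G` on `H` via `α`. -/
def orbitOf {G H : Type*} [Group G] [Group H] (α : G →* MulAut H) (a : H) : Set H :=
  Set.range fun g : G => α g a

/-- The subgroup of fixed points `H^G` of the action of `G` on `H` via `α`. -/
def fixedSubgroup {G H : Type*} [Group G] [Group H] (α : G →* MulAut H) : Subgroup H where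
  carrier := {h : H | ∀ g : G, α g h = h}
  one_mem' := fun g => map_one (α g)
  mul_mem' := fun {a b} ha hb g => by rw [map_mul, ha g, hb g]
  inv_mem' := fun {a} ha g => by rw [map_inv, ha g]

section Aux
variable {G H : Type*} [Group G] [Group H] (α : G →* MulAut H)

lemma mem_orbitOf_self (b : H) : b ∈ orbitOf α b := ⟨1, by simp⟩

lemma orbitOf_eq_of_mem {b c : H} (h : c ∈ orbitOf α b) : orbitOf α c = orbitOf α b := by
  obtain ⟨g, rfl⟩ := h
  ext x
  simp only [orbitOf, Set.mem_range]
  constructor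
  · rintro ⟨g', rfl⟩
    exact ⟨g' * g, by simp [map_mul]⟩
  · rintro ⟨g', rfl⟩
    exact ⟨g' * g⁻¹, by simp [map_mul, ← MulAut.mul_apply, ← map_mul]⟩

lemma orbitOf_mem_fixed {b : H} (hb : b ∈ fixedSubgroup α) : orbitOf α b = {b} := by
  ext x
  simp only [orbitOf, Set.mem_range, Set.mem_singleton_iff]
  exact ⟨fun ⟨g, hg⟩ => hg ▸ hb g, fun h => ⟨1, by simp [h]⟩⟩

lemma ncard_orbitOf_dvd [Finite G] [Finite H] (b : H) :
    (orbitOf α b).ncard ∣ Nat.card G := by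
  letI := MulAction.compHom H α
  have horb : orbitOf α b = MulAction.orbit G b := rfl
  have key : Nat.card (MulAction.orbit G b) * Nat.card (MulAction.stabilizer G b)
      = Nat.card G := by
    rw [← Nat.card_prod]
    exact Nat.card_congr (MulAction.orbitProdStabilizerEquivGroup G b)
  rw [horb, ← Nat.card_coe_set_eq]
  exact ⟨_, key.symm⟩

end Aux

theorem stmt_14 {G H : Type*} [Group G] [Group H] [Finite G] [Finite H]
    (α : G →* MulAut H) (hcard : Nat.card G = Nat.card H)
    (L : Set H) (a : H) (hL : L = orbitOf α a) (hnt : 1 < L.ncard)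
    (huniq : ∀ b : H, 1 < (orbitOf α b).ncard → orbitOf α b = L) :
    (fixedSubgroup α).index = 2 ∧ L.ncard = Nat.card H / 2 ∧
      L = ((fixedSubgroup α : Set H))ᶜ := by
  set F := fixedSubgroup α with hF
  have hcompl : L = ((F : Set H))ᶜ := by
    ext x
    simp only [Set.mem_compl_iff, SetLike.mem_coe]
    constructor
    · intro hx hxF
      have h0 : orbitOf α x = L := by
        rw [hL] at hx ⊢
        exact orbitOf_eq_of_mem α hx
      have h1 : orbitOf α x = {x} := orbitOf_mem_fixed α hxF
      rw [← h0, h1] at hnt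
      simp at hnt
    · intro hx
      have h2 : 1 < (orbitOf α x).ncard := by
        obtain ⟨g, hg⟩ : ∃ g, α g x ≠ x := by
          by_contra h
          push_neg at h
          exact hx h
        rw [Set.one_lt_ncard_iff (Set.toFinite _)]
        exact ⟨α g x, x, ⟨g, rfl⟩, mem_orbitOf_self α x, hg⟩
      exact (huniq x h2) ▸ mem_orbitOf_self α x
  have hFcard : Nat.card F * F.index = Nat.card H := Subgroup.card_mul_index F
  have hsum : (F : Set H).ncard + L.ncard = Nat.card H := by
    rw [hcompl]; exact Set.ncard_add_ncard_compl _
  have hFncard : (F : Set H).ncard = Nat.card F := (Nat.card_coe_set_eq _).symm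
  have hdvd : L.ncard ∣ Nat.card H := hcard ▸ hL ▸ ncard_orbitOf_dvd α a
  have hFpos : 0 < Nat.card F := Nat.card_pos
  have hH : 0 < Nat.card H := Nat.card_pos
  have h0 : F.index ≠ 0 := by intro h; rw [h, mul_zero] at hFcard; omega
  have h1 : F.index ≠ 1 := by
    intro h
    rw [h, mul_one] at hFcard
    omega
  have hk2 : 2 ≤ F.index := by omega
  have hLcard : L.ncard = Nat.card F * (F.index - 1) := by
    have : Nat.card F * (F.index - 1) = Nat.card F * F.index - Nat.card F := by
      rw [Nat.mul_sub_one]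
    omega
  have hdvd2 : F.index - 1 ∣ F.index := by
    rw [hLcard, ← hFcard] at hdvd
    exact (Nat.mul_dvd_mul_iff_left hFpos).1 hdvd
  have hidx : F.index = 2 := by
    have hone : F.index - (F.index - 1) = 1 := by omega
    have hd1 := Nat.dvd_sub hdvd2 dvd_rfl
    rw [hone] at hd1
    have := Nat.dvd_one.1 hd1
    omega
  refine ⟨hidx, ?_, hcompl⟩
  rw [hidx, mul_two] at hFcard
  omega
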